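/- Let G be an r-regular finite simple graph with at least one edge, let λ_min be the minimum eigenvalue of its adjacency matrix, and suppose k = (λ_min − r)/λ_min is a positive integer. Let f : V → {1,…,k} be a proper vertex coloring of G (adjacent vertices get distinct colors) in which every color class C_i = f⁻¹(i) is nonempty. Then f is a perfect k-coloring: there exist integers q_{ij} (1 ≤ i,j ≤ k) such that every vertex of color i has exactly q_{ij} neighbors of color j, and q_{ii} = 0 for all i. -/

import Mathlib

open Finset
open scoped Classical
open scoped Matrix

/-- A proper k-coloring of an r-regular graph with `k = (λ_min - r)/λ_min`
colors, all of whose color classes are nonempty, is a perfect k-coloring. -/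
theorem proper_coloring_is_perfect_of_hoffman_chromatic
    {V : Type*} [Fintype V] (G : SimpleGraph V) [DecidableRel G.Adj]
    (r : ℕ) (hreg : G.IsRegularOfDegree r)
    (hedge : ∃ x y, G.Adj x y)
    (lmin : ℝ)
    (hmin : ∃ g : V → ℝ, g ≠ 0 ∧ (G.adjMatrix ℝ).mulVec g = lmin • g)
    (hleast : ∀ μ : ℝ,
      (∃ g : V → ℝ, g ≠ 0 ∧ (G.adjMatrix ℝ).mulVec g = μ • g) → lmin ≤ μ)
    (k : ℕ) (hk : 0 < k) (hkval : (k : ℝ) = (lmin - (r : ℝ)) / lmin)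
    (f : V → Fin k)
    (hproper : ∀ x y, G.Adj x y → f x ≠ f y)
    (hclasses : ∀ i : Fin k, ∃ x, f x = i) :
    ∃ q : Fin k → Fin k → ℕ,
      (∀ i, q i i = 0) ∧
      ∀ x : V, ∀ j : Fin k,
        (univ.filter fun y => G.Adj x y ∧ f y = j).card = q (f x) j := by
  classical
  have hkR : (k : ℝ) ≠ 0 := Nat.cast_ne_zero.mpr hk.ne'
  have hl0 : lmin ≠ 0 := by
    intro h
    rw [h, div_zero] at hkval
    exact hkR hkval
  have hkval' : (k : ℝ) * lmin = lmin - r := by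
    field_simp at hkval; linarith [hkval]
  have hlk : lmin * ((k : ℝ) - 1) = -(r : ℝ) := by ring_nf; linarith [hkval']
  set A := G.adjMatrix ℝ with hAdef
  have hA : A.IsHermitian := by
    rw [Matrix.IsHermitian, Matrix.conjTranspose_eq_transpose_of_trivial]
    exact G.isSymm_adjMatrix
  set B : Matrix V V ℝ := A - lmin • 1 with hBdef
  have hB : B.IsHermitian := by
    have h1 : (lmin • (1 : Matrix V V ℝ)).IsHermitian := by
      rw [Matrix.IsHermitian, Matrix.conjTranspose_smul, Matrix.conjTranspose_one]
      simp
    exact hA.sub h1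
  have hmv : ∀ v : V → ℝ, B *ᵥ v = A *ᵥ v - lmin • v := by
    intro v
    rw [hBdef, Matrix.sub_mulVec, Matrix.smul_mulVec, Matrix.one_mulVec]
  have hPSD : B.PosSemidef := by
    apply hB.posSemidef_iff_eigenvalues_nonneg.mpr
    intro i
    have hv := hB.mulVec_eigenvectorBasis i
    have hvne : (⇑(hB.eigenvectorBasis i) : V → ℝ) ≠ 0 :=
      by simpa using hB.eigenvectorBasis.orthonormal.ne_zero i
    have hAv : A *ᵥ ⇑(hB.eigenvectorBasis i)
        = (hB.eigenvalues i + lmin) • ⇑(hB.eigenvectorBasis i) := by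
      have h := hmv ⇑(hB.eigenvectorBasis i)
      rw [hv, eq_sub_iff_add_eq] at h
      rw [← h, add_smul]
    have := hleast (hB.eigenvalues i + lmin) ⟨_, hvne, hAv⟩
    show (0:ℝ) ≤ _; linarith
  set u : Fin k → V → ℝ := fun i x => (k : ℝ) * (if f x = i then 1 else 0) - 1 with hu
  have key : ∀ x y : V, (∑ j, u j x * u j y)
      = (k : ℝ) * ((if f x = f y then (k : ℝ) else 0) - 1) := by
    intro x y
    have h1 : ∀ j : Fin k, u j x * u j y =
        (k : ℝ) * (k : ℝ) * ((if f x = j then (1:ℝ) else 0) * (if f y = j then (1:ℝ) else 0))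
        - (k : ℝ) * (if f x = j then (1:ℝ) else 0)
        - (k : ℝ) * (if f y = j then (1:ℝ) else 0) + 1 := by
      intro j; simp only [hu]; ring
    rw [Finset.sum_congr rfl fun j _ => h1 j]
    by_cases h : f x = f y <;>
      · simp [Finset.sum_add_distrib, Finset.sum_sub_distrib, ← Finset.mul_sum,
          ite_mul, Finset.sum_ite_eq, h, Finset.card_univ, eq_comm]
        try ring
  have hdiag : ∀ x : V, (∑ j, u j x * u j x) = (k : ℝ) * ((k : ℝ) - 1) := by
    intro x; rw [key x x]; simp
  have hnb : ∀ (x : V) (j : Fin k), (∑ y ∈ G.neighborFinset x, u j y)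
      = (k : ℝ) * ((univ.filter fun y => G.Adj x y ∧ f y = j).card : ℝ) - r := by
    intro x j
    have hset : (G.neighborFinset x).filter (fun y => f y = j)
        = univ.filter fun y => G.Adj x y ∧ f y = j := by
      ext y; simp [SimpleGraph.mem_neighborFinset]
    simp only [hu]
    rw [Finset.sum_sub_distrib, ← Finset.mul_sum, Finset.sum_boole, hset,
      Finset.sum_const, SimpleGraph.card_neighborFinset_eq_degree, hreg x,
      nsmul_eq_mul, mul_one]
  have hform : ∀ j : Fin k, u j ⬝ᵥ (B *ᵥ u j)
      = (∑ x, u j x * ∑ y ∈ G.neighborFinset x, u j y) - lmin * ∑ x, u j x * u j x := by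
    intro j
    rw [hmv, dotProduct_sub, dotProduct_smul]
    simp [dotProduct, hAdef, SimpleGraph.adjMatrix_mulVec_apply, smul_eq_mul]
  have hsum0 : (∑ j, u j ⬝ᵥ (B *ᵥ u j)) = 0 := by
    rw [Finset.sum_congr rfl fun j _ => hform j, Finset.sum_sub_distrib, ← Finset.mul_sum]
    have h1 : (∑ j : Fin k, ∑ x, u j x * ∑ y ∈ G.neighborFinset x, u j y)
        = -((Fintype.card V : ℝ) * r * k) := by
      rw [Finset.sum_comm]
      have hx : ∀ x : V, (∑ j, u j x * ∑ y ∈ G.neighborFinset x, u j y)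
          = -((r : ℝ) * k) := by
        intro x
        have hmulsum : ∀ j : Fin k, u j x * ∑ y ∈ G.neighborFinset x, u j y
            = ∑ y ∈ G.neighborFinset x, u j x * u j y := fun j => Finset.mul_sum _ _ _
        rw [Finset.sum_congr rfl fun j _ => hmulsum j, Finset.sum_comm]
        have hy : ∀ y ∈ G.neighborFinset x, (∑ j, u j x * u j y) = -(k : ℝ) := by
          intro y hy
          rw [key]
          have hne : f x ≠ f y := hproper x y ((SimpleGraph.mem_neighborFinset _ _ _).mp hy)
          simp [hne]
        rw [Finset.sum_congr rfl hy, Finset.sum_const,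
          SimpleGraph.card_neighborFinset_eq_degree, hreg x]
        rw [nsmul_eq_mul]; ring
      rw [Finset.sum_congr rfl fun x _ => hx x, Finset.sum_const, Finset.card_univ,
        nsmul_eq_mul]
      ring
    have h2 : (∑ j : Fin k, ∑ x, u j x * u j x)
        = (Fintype.card V : ℝ) * ((k : ℝ) * ((k : ℝ) - 1)) := by
      rw [Finset.sum_comm, Finset.sum_congr rfl fun x _ => hdiag x, Finset.sum_const,
        Finset.card_univ, nsmul_eq_mul]
    rw [h1, h2]
    linear_combination (-(Fintype.card V : ℝ) * (k : ℝ)) * hlk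
  have hSz : ∀ j : Fin k, u j ⬝ᵥ (B *ᵥ u j) = 0 := by
    have hnn : ∀ j ∈ (univ : Finset (Fin k)), 0 ≤ u j ⬝ᵥ (B *ᵥ u j) := by
      intro j _
      simpa using hPSD.dotProduct_mulVec_nonneg (u j)
    exact fun j => (Finset.sum_eq_zero_iff_of_nonneg hnn).mp hsum0 j (mem_univ j)
  have hBu : ∀ j, B *ᵥ u j = 0 := by
    intro j
    apply (hPSD.dotProduct_mulVec_zero_iff (u j)).mp
    simpa using hSz j
  have hpoint : ∀ (x : V) (j : Fin k),
      (k : ℝ) * ((univ.filter fun y => G.Adj x y ∧ f y = j).card : ℝ) - r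
        = lmin * ((k : ℝ) * (if f x = j then 1 else 0) - 1) := by
    intro x j
    have hAe : A *ᵥ u j = lmin • u j := by
      have h := hBu j; rw [hmv, sub_eq_zero] at h; exact h
    have h2 := congrFun hAe x
    simp only [hAdef, SimpleGraph.adjMatrix_mulVec_apply, Pi.smul_apply, smul_eq_mul] at h2
    rw [hnb x j] at h2
    simpa [hu] using h2
  refine ⟨fun i j => if i = j then 0 else
      (univ.filter fun y => G.Adj (hclasses i).choose y ∧ f y = j).card,
    fun i => by simp, ?_⟩
  intro x j
  by_cases hxj : f x = j
  · have h := hpoint x j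
    rw [if_pos hxj] at h
    have hl1 : lmin * ((k : ℝ) * 1 - 1) = -(r : ℝ) := by rw [mul_one]; exact hlk
    have hz : (k : ℝ) * ((univ.filter fun y => G.Adj x y ∧ f y = j).card : ℝ) = 0 := by
      linarith
    have hc0 : ((univ.filter fun y => G.Adj x y ∧ f y = j).card : ℝ) = 0 :=
      (mul_eq_zero.mp hz).resolve_left hkR
    simp only [if_pos hxj]
    exact_mod_cast hc0
  · have h1 := hpoint x j
    rw [if_neg hxj] at h1
    have hwspec : f (hclasses (f x)).choose = f x := (hclasses (f x)).choose_spec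
    have hwj : f (hclasses (f x)).choose ≠ j := by rw [hwspec]; exact hxj
    have h2 := hpoint (hclasses (f x)).choose j
    rw [if_neg hwj] at h2
    have hcast : ((univ.filter fun y => G.Adj x y ∧ f y = j).card : ℝ)
        = ((univ.filter fun y => G.Adj (hclasses (f x)).choose y ∧ f y = j).card : ℝ) := by
      apply mul_left_cancel₀ hkR
      linarith
    simp only [if_neg hxj]
    exact_mod_cast hcast
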